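/- Let $f$ be the bistable reaction term $f(p) = b_1 d_2 s_h \frac{p(1-p)(p-\theta)}{b_1(1-p)(1-s_h p)+b_2 p}$ with $d_1 \le d_2 \le b_2 \le b_1$, all positive, $s_h \in (0,1]$, and $\theta \in (0,1)$. Then $f''$ admits exactly one zero $\theta_2$ in $(0,1)$, and $f''(p) > 0$ for $p \in (0,\theta_2)$, $f''(p) < 0$ for $p \in (\theta_2, 1)$. -/

import Mathlib

open Set

lemma cubic_sign (r0 r1 r2 r3 : ℝ) (h0 : 0 < r0) (h3 : 0 < r3)
    (h1v : r0 + r1 + r2 + r3 < 0) :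
    ∃ θ2 ∈ Ioo (0:ℝ) 1, (r0 + r1*θ2 + r2*θ2^2 + r3*θ2^3 = 0) ∧
      ∀ p ∈ Ioo (0:ℝ) 1,
        (p < θ2 → 0 < r0 + r1*p + r2*p^2 + r3*p^3) ∧
        (θ2 < p → r0 + r1*p + r2*p^2 + r3*p^3 < 0) := by
  set Q : ℝ → ℝ := fun p => r0 + r1*p + r2*p^2 + r3*p^3 with hQdef
  have hQc : Continuous Q := by fun_prop
  have hQ0 : 0 < Q 0 := by simp [hQdef]; nlinarith
  have hQ1 : Q 1 < 0 := by simp [hQdef]; nlinarith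
  -- no two roots in (0,1)
  have key : ∀ x y : ℝ, 0 < x → x < y → y < 1 → Q x = 0 → Q y = 0 → False := by
    intro x y hx hxy hy1 hQx hQy
    set M : ℝ := 1 + (1 + |r0| + |r1| + |r2|)/r3 with hM
    have hM1 : 1 < M := by
      have hX : 0 < (1 + |r0| + |r1| + |r2|)/r3 := by positivity
      rw [hM]; linarith
    have hQM : 0 < Q M := by
      have hMr : r3 * M = r3 + (1 + |r0| + |r1| + |r2|) := by
        rw [hM, mul_add, mul_comm r3 ((1 + |r0| + |r1| + |r2|) / r3), div_mul_cancel₀ _ h3.ne']; ring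
      have h1 : -|r0| ≤ r0 := neg_abs_le r0
      have h2 : -|r1| ≤ r1 := neg_abs_le r1
      have h3' : -|r2| ≤ r2 := neg_abs_le r2
      have hM2 : 1 ≤ M^2 := by nlinarith
      have hM0 : 0 < M := by linarith
      simp only [hQdef]
      nlinarith [abs_nonneg r0, abs_nonneg r1, abs_nonneg r2, sq_nonneg M,
        mul_pos hM0 hM0, mul_le_mul_of_nonneg_left h2 hM0.le]
    obtain ⟨w, hwmem, hQw⟩ : ∃ w ∈ Ioo (1:ℝ) M, Q w = 0 := by
      have := intermediate_value_Ioo (le_of_lt hM1) hQc.continuousOn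
      have h0mem : (0:ℝ) ∈ Ioo (Q 1) (Q M) := ⟨hQ1, hQM⟩
      obtain ⟨w, hw, hw0⟩ := this h0mem
      exact ⟨w, hw, hw0⟩
    have hid : (r0 + r3*x*y*w) * ((y-x)*(w-x)*(w-y)) =
        y*w*(w-y)*(Q x) - x*w*(w-x)*(Q y) + x*y*(y-x)*(Q w) := by
      simp only [hQdef]; ring
    rw [hQx, hQy, hQw] at hid
    have hw1 : 1 < w := hwmem.1
    have hV : 0 < (y-x)*(w-x)*(w-y) :=
      mul_pos (mul_pos (by linarith) (by linarith)) (by linarith)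
    have hpos : 0 < r0 + r3*x*y*w := by
      have hw0 : (0:ℝ) < w := by linarith
      have : 0 < r3*x*y*w := mul_pos (mul_pos (mul_pos h3 hx) (by linarith)) hw0
      linarith
    nlinarith [mul_pos hpos hV]
  -- root in (0,1)
  obtain ⟨c, hcmem, hQcz⟩ : ∃ c ∈ Ioo (0:ℝ) 1, Q c = 0 := by
    have := intermediate_value_Ioo' (by norm_num : (0:ℝ) ≤ 1) hQc.continuousOn
    obtain ⟨c, hc, hc0⟩ := this (⟨hQ1, hQ0⟩ : (0:ℝ) ∈ Ioo (Q 1) (Q 0))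
    exact ⟨c, hc, hc0⟩
  set S : Set ℝ := Icc 0 1 ∩ Q ⁻¹' (Iic 0) with hSdef
  have hSc : IsClosed S := isClosed_Icc.inter (isClosed_Iic.preimage hQc)
  have hSne : S.Nonempty := ⟨c, ⟨le_of_lt hcmem.1, le_of_lt hcmem.2⟩, le_of_eq hQcz⟩
  have hSbdd : BddBelow S := ⟨0, fun x hx => hx.1.1⟩
  set θ2 : ℝ := sInf S with hθ2def
  have hθ2S : θ2 ∈ S := hSc.csInf_mem hSne hSbdd
  simp only [hSdef, mem_inter_iff, mem_preimage, mem_Iic, mem_Icc] at hθ2S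
  have hθ2le : θ2 ≤ c := csInf_le hSbdd ⟨⟨le_of_lt hcmem.1, le_of_lt hcmem.2⟩, le_of_eq hQcz⟩
  have hθ2lt1 : θ2 < 1 := lt_of_le_of_lt hθ2le hcmem.2
  have hθ2pos : 0 < θ2 := by
    rcases lt_or_eq_of_le hθ2S.1.1 with h | h
    · exact h
    · exfalso; have h2 := hθ2S.2; rw [← h] at h2; linarith
  have hbelow : ∀ p, 0 ≤ p → p < θ2 → 0 < Q p := by
    intro p hp0 hpθ
    by_contra h
    push_neg at h
    have : p ∈ S := ⟨⟨hp0, le_of_lt (lt_trans hpθ hθ2lt1)⟩, h⟩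
    exact absurd (csInf_le hSbdd this) (not_le.mpr hpθ)
  have hQθ2 : Q θ2 = 0 := by
    rcases lt_or_eq_of_le (hθ2S.2 : Q θ2 ≤ 0) with h | h
    · exfalso
      have hcont : ContinuousAt Q θ2 := hQc.continuousAt
      have hev : ∀ᶠ x in nhds θ2, Q x < 0 :=
        hcont.eventually_lt continuousAt_const h
      rw [Metric.eventually_nhds_iff] at hev
      obtain ⟨ε, hε, hB⟩ := hev
      set p : ℝ := max (θ2/2) (θ2 - ε/2) with hpdef
      have hp1 : p < θ2 := by
        apply max_lt <;> [linarith; linarith]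
      have hp0 : 0 ≤ p := le_trans (by linarith) (le_max_left _ _)
      have hpd : dist p θ2 < ε := by
        rw [Real.dist_eq, abs_lt]
        constructor
        · have : θ2 - ε/2 ≤ p := le_max_right _ _
          linarith
        · linarith
      exact absurd (hB hpd) (not_lt.mpr (hbelow p hp0 hp1).le)
    · exact h
  refine ⟨θ2, ⟨hθ2pos, hθ2lt1⟩, hQθ2, ?_⟩
  intro p hp
  constructor
  · intro hpθ; exact hbelow p hp.1.le hpθ
  · intro hθp
    by_contra h
    push_neg at h
    rcases lt_or_eq_of_le h with h' | h'
    · -- Q p > 0, root between p and 1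
      obtain ⟨y, hymem, hQy⟩ : ∃ y ∈ Ioo p 1, Q y = 0 := by
        have := intermediate_value_Ioo' (le_of_lt hp.2) hQc.continuousOn
        obtain ⟨y, hy, hy0⟩ := this (⟨hQ1, h'⟩ : (0:ℝ) ∈ Ioo (Q 1) (Q p))
        exact ⟨y, hy, hy0⟩
      exact key θ2 y hθ2pos (lt_trans hθp hymem.1) hymem.2 hQθ2 hQy
    · exact key θ2 p hθ2pos hθp hp.2 hQθ2 h'.symm


lemma poly3 (a b c d x : ℝ) :
    HasDerivAt (fun q : ℝ => a + b*q + c*q^2 + d*q^3) (b + 2*c*x + 3*d*x^2) x := by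
  have h1 : HasDerivAt (fun q : ℝ => q) 1 x := hasDerivAt_id x
  have h2 : HasDerivAt (fun q : ℝ => q^2) (2*x) x := by
    simpa using hasDerivAt_pow 2 x
  have h3 : HasDerivAt (fun q : ℝ => q^3) (3*x^2) x := by
    simpa using hasDerivAt_pow 3 x
  have := (((hasDerivAt_const x a).add (h1.const_mul b)).add (h2.const_mul c)).add
    (h3.const_mul d)
  exact this.congr_deriv (by ring)

set_option maxHeartbeats 1000000 in
lemma second_deriv_formula (K b1 b2 sh θ : ℝ) (f : ℝ → ℝ)
    (hf : ∀ p, f p = K * (p * (1 - p) * (p - θ)) /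
      (b1 * (1 - p) * (1 - sh * p) + b2 * p))
    (p : ℝ) (hD : b1 * (1 - p) * (1 - sh * p) + b2 * p ≠ 0) :
    iteratedDeriv 2 f p = K *
      ((2*b1^2 - 2*θ*sh*b1^2 + 2*θ*b1*b2)
        + (-6*b1^2 + 6*θ*sh*b1^2) * p
        + (6*b1^2 - 6*b1*b2 - 6*θ*sh*b1^2) * p^2
        + (2*sh*b1*b2 - 2*b1^2 + 4*b1*b2 - 2*b2^2 + 2*θ*sh*b1^2 - 2*θ*sh*b1*b2) * p^3)
      / (b1 * (1 - p) * (1 - sh * p) + b2 * p)^3 := by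
  have hnum : ∀ q : ℝ, K * (q * (1 - q) * (q - θ)) =
      0 + (-(K*θ))*q + (K*(1+θ))*q^2 + (-K)*q^3 := by intro q; ring
  have hden : ∀ q : ℝ, b1 * (1 - q) * (1 - sh * q) + b2 * q =
      b1 + (b2-b1-b1*sh)*q + (b1*sh)*q^2 + 0*q^3 := by intro q; ring
  have hfeq : f = fun q => (0 + (-(K*θ))*q + (K*(1+θ))*q^2 + (-K)*q^3) /
      (b1 + (b2-b1-b1*sh)*q + (b1*sh)*q^2 + 0*q^3) := by
    funext q; rw [hf q, hnum q, hden q]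
  set Nc : ℝ → ℝ := fun q => 0 + (-(K*θ))*q + (K*(1+θ))*q^2 + (-K)*q^3 with hNcdef
  set Dc : ℝ → ℝ := fun q => b1 + (b2-b1-b1*sh)*q + (b1*sh)*q^2 + 0*q^3 with hDcdef
  set Nd : ℝ → ℝ := fun x => (-(K*θ)) + 2*(K*(1+θ))*x + 3*(-K)*x^2 with hNddef
  set Dd : ℝ → ℝ := fun x => (b2-b1-b1*sh) + 2*(b1*sh)*x + 3*0*x^2 with hDddef
  have hNc : ∀ x : ℝ, HasDerivAt Nc (Nd x) x := fun x => poly3 _ _ _ _ x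
  have hDc : ∀ x : ℝ, HasDerivAt Dc (Dd x) x := fun x => poly3 _ _ _ _ x
  set g : ℝ → ℝ := fun x => (Nd x * Dc x - Nc x * Dd x) / Dc x ^ 2 with hgdef
  have hDp : Dc p ≠ 0 := by
    rw [hDcdef]; intro h; exact hD (by rw [hden p]; exact h)
  have hfd : ∀ x, Dc x ≠ 0 → HasDerivAt f (g x) x := by
    intro x hx
    rw [hfeq]
    exact (hNc x).div (hDc x) hx
  have hDcont : Continuous Dc := by rw [hDcdef]; fun_prop
  have hU : IsOpen {x : ℝ | Dc x ≠ 0} := by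
    have : {x : ℝ | Dc x ≠ 0} = Dc ⁻¹' ({0}ᶜ) := rfl
    rw [this]
    exact IsOpen.preimage hDcont isOpen_compl_singleton
  have hloc : deriv f =ᶠ[nhds p] g := by
    filter_upwards [hU.mem_nhds hDp] with x hx
    exact (hfd x hx).deriv
  -- derivative of g at p
  have hNd' : ∀ x : ℝ, HasDerivAt Nd (2*(K*(1+θ)) + 2*(3*(-K))*x) x := by
    intro x
    have heq : Nd = fun q : ℝ => (-(K*θ)) + (2*(K*(1+θ)))*q + (3*(-K))*q^2 + 0*q^3 := by
      funext q; rw [hNddef]; ring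
    rw [heq]
    have := poly3 (-(K*θ)) (2*(K*(1+θ))) (3*(-K)) 0 x
    convert this using 1; ring
  have hDd' : ∀ x : ℝ, HasDerivAt Dd (2*(b1*sh)) x := by
    intro x
    have heq : Dd = fun q : ℝ => (b2-b1-b1*sh) + (2*(b1*sh))*q + 0*q^2 + 0*q^3 := by
      funext q; rw [hDddef]; ring
    rw [heq]
    have := poly3 (b2-b1-b1*sh) (2*(b1*sh)) 0 0 x
    convert this using 1; ring
  have hu : HasDerivAt (fun x => Nd x * Dc x - Nc x * Dd x)
      (((2*(K*(1+θ)) + 2*(3*(-K))*p) * Dc p + Nd p * Dd p)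
        - (Nd p * Dd p + Nc p * (2*(b1*sh)))) p :=
    (((hNd' p).mul (hDc p))).sub ((hNc p).mul (hDd' p))
  have hv : HasDerivAt (fun x => Dc x ^ 2) ((2:ℕ) * Dc p ^ 1 * Dd p) p :=
    (hDc p).pow 2
  have hgd : HasDerivAt g
      (((((2*(K*(1+θ)) + 2*(3*(-K))*p) * Dc p + Nd p * Dd p)
        - (Nd p * Dd p + Nc p * (2*(b1*sh)))) * Dc p ^ 2
        - (Nd p * Dc p - Nc p * Dd p) * ((2:ℕ) * Dc p ^ 1 * Dd p)) / (Dc p ^ 2) ^ 2) p := by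
    rw [hgdef]
    exact hu.div hv (pow_ne_zero 2 hDp)
  have h2d : iteratedDeriv 2 f p = deriv g p := by
    have e1 : iteratedDeriv 2 f = deriv (deriv f) := by
      rw [iteratedDeriv_succ, iteratedDeriv_one]
    rw [e1]
    exact hloc.deriv_eq
  rw [h2d, hgd.deriv]
  rw [div_eq_div_iff (pow_ne_zero 2 (pow_ne_zero 2 hDp)) (pow_ne_zero 3 hD)]
  simp only [hNcdef, hNddef, hDcdef, hDddef]
  push_cast
  ring


set_option maxHeartbeats 1000000 in
theorem f_second_deriv_unique_zero (b1 b2 d1 d2 sh θ : ℝ)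
    (hd1 : 0 < d1) (h12 : d1 ≤ d2) (h2b : d2 ≤ b2) (hbb : b2 ≤ b1)
    (hsh : sh ∈ Ioc (0:ℝ) 1)
    (hθdef : θ = (1 / sh) * (1 - d1 * b2 / (d2 * b1)))
    (hθ : θ ∈ Ioo (0:ℝ) 1) (f : ℝ → ℝ)
    (hf : ∀ p, f p = b1 * d2 * sh * (p * (1 - p) * (p - θ)) /
      (b1 * (1 - p) * (1 - sh * p) + b2 * p)) :
    ∃ θ2 ∈ Ioo (0:ℝ) 1, iteratedDeriv 2 f θ2 = 0 ∧
      ∀ p ∈ Ioo (0:ℝ) 1,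
        (p < θ2 → 0 < iteratedDeriv 2 f p) ∧ (θ2 < p → iteratedDeriv 2 f p < 0) := by
  obtain ⟨hshpos, hsh1⟩ := hsh
  obtain ⟨hθ0, hθ1⟩ := hθ
  have hd2 : 0 < d2 := lt_of_lt_of_le hd1 h12
  have hb2 : 0 < b2 := lt_of_lt_of_le hd2 h2b
  have hb1 : 0 < b1 := lt_of_lt_of_le hb2 hbb
  have hKpos : 0 < b1 * d2 * sh := by positivity
  have heq : d2 * b1 * (1 - sh * θ) = d1 * b2 := by
    rw [hθdef]
    field_simp
    ring
  have h1u : 0 < 1 - sh * θ := by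
    nlinarith [mul_pos hd1 hb2, mul_pos hd2 hb1]
  have hkey : b1 * (1 - sh * θ) ≤ b2 := by
    nlinarith [mul_le_mul_of_nonneg_right h12 hb2.le]
  -- coefficients of the cubic R
  set r0 : ℝ := 2*b1^2 - 2*θ*sh*b1^2 + 2*θ*b1*b2 with hr0
  set r1 : ℝ := -6*b1^2 + 6*θ*sh*b1^2 with hr1
  set r2 : ℝ := 6*b1^2 - 6*b1*b2 - 6*θ*sh*b1^2 with hr2
  set r3 : ℝ := 2*sh*b1*b2 - 2*b1^2 + 4*b1*b2 - 2*b2^2 + 2*θ*sh*b1^2 - 2*θ*sh*b1*b2 with hr3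
  have h0 : 0 < r0 := by
    rw [hr0]; nlinarith [mul_pos hb1 h1u, mul_pos (mul_pos hθ0 hb1) hb2]
  have h3 : 0 < r3 := by
    rw [hr3]
    nlinarith [mul_le_mul_of_nonneg_left hkey hb1.le,
      mul_le_mul_of_nonneg_left hbb hb2.le,
      mul_pos (mul_pos hb1 hb2) (mul_pos hshpos (sub_pos.2 hθ1))]
  have h1v : r0 + r1 + r2 + r3 < 0 := by
    rw [hr0, hr1, hr2, hr3]
    nlinarith [mul_le_mul_of_nonneg_left hkey hb2.le,
      mul_pos (mul_pos hb1 hb2) (sub_pos.2 hθ1),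
      mul_pos (mul_pos hb1 hb2) (sub_pos.2 (lt_of_le_of_lt hsh1 (by norm_num : (1:ℝ) < 2)))]
  obtain ⟨θ2, hθ2mem, hQz, hQsign⟩ := cubic_sign r0 r1 r2 r3 h0 h3 h1v
  have hDpos : ∀ p ∈ Ioo (0:ℝ) 1, 0 < b1 * (1 - p) * (1 - sh * p) + b2 * p := by
    intro p hp
    have h1 : 0 ≤ 1 - p := by linarith [hp.2]
    have h2 : 0 ≤ 1 - sh * p := by nlinarith [hp.1.le, hp.2.le]
    nlinarith [mul_pos hb2 hp.1, mul_nonneg (mul_nonneg hb1.le h1) h2]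
  have hform : ∀ p ∈ Ioo (0:ℝ) 1, iteratedDeriv 2 f p =
      b1 * d2 * sh * (r0 + r1*p + r2*p^2 + r3*p^3) /
        (b1 * (1 - p) * (1 - sh * p) + b2 * p)^3 := by
    intro p hp
    rw [hr0, hr1, hr2, hr3]
    exact second_deriv_formula (b1*d2*sh) b1 b2 sh θ f hf p (ne_of_gt (hDpos p hp))
  refine ⟨θ2, hθ2mem, ?_, ?_⟩
  · rw [hform θ2 hθ2mem, hQz]
    simp
  · intro p hp
    have hD3 : 0 < (b1 * (1 - p) * (1 - sh * p) + b2 * p)^3 := pow_pos (hDpos p hp) 3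
    constructor
    · intro hlt
      rw [hform p hp]
      exact div_pos (mul_pos hKpos ((hQsign p hp).1 hlt)) hD3
    · intro hlt
      rw [hform p hp]
      exact div_neg_of_neg_of_pos (mul_neg_of_pos_of_neg hKpos ((hQsign p hp).2 hlt)) hD3
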